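/- Let n ≥ 1 and let A ⊂ ℕⁿ be a finite nonempty set which is convenient, meaning that for each i = 1,…,n there is an integer a_i > 0 with a_i·e_i ∈ A (e_i the i-th standard basis vector); then ρ(x) = Σ_{α ∈ A} Π_{i=1}^n |x_i|^{α_i} is strictly positive for x ≠ 0. Let u ∈ ℝ_{≥0}ⁿ and suppose there exists a nonzero vector v ∈ ℝ_{≥0}ⁿ with u − v ∈ Γ₊(A) = conv(A) + ℝ_{≥0}ⁿ. Then lim_{x → 0, x ≠ 0} ( Π_{i=1}^n |x_i|^{u_i} ) / ρ(x) = 0. -/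
import Mathlib


open Filter

private lemma key_amgm {n : ℕ} (A : Finset (Fin n → ℕ)) (a : Fin n → ℝ)
    (ha : a ∈ convexHull ℝ ((fun α : Fin n → ℕ => fun i => (α i : ℝ)) '' ↑A))
    (y : Fin n → ℝ) (hy : ∀ i, 0 ≤ y i) :
    ∏ i, y i ^ a i ≤ ∑ α ∈ A, ∏ i, y i ^ (α i) := by
  rw [convexHull_eq] at ha
  obtain ⟨ι, t, w, z, hw0, hw1, hz, hcm⟩ := ha
  rw [Finset.centerMass_eq_of_sum_1 _ _ hw1] at hcm
  have hz0 : ∀ k ∈ t, ∀ i, 0 ≤ z k i := by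
    intro k hk i
    obtain ⟨α, _, hα⟩ := hz k hk
    rw [← hα]
    exact Nat.cast_nonneg _
  have haeq : ∀ i, a i = ∑ k ∈ t, w k * z k i := by
    intro i
    rw [← hcm]
    simp [Finset.sum_apply]
  set ρ := ∑ α ∈ A, ∏ i, y i ^ (α i) with hρdef
  have hρ0 : (0:ℝ) ≤ ρ :=
    Finset.sum_nonneg fun α _ => Finset.prod_nonneg fun i _ => pow_nonneg (hy i) _
  have hP : ∀ k ∈ t, (∏ i, y i ^ (z k i)) ≤ ρ := by
    intro k hk
    obtain ⟨α, hαA, hα⟩ := hz k hk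
    have : (∏ i, y i ^ (z k i)) = ∏ i, y i ^ (α i) := by
      refine Finset.prod_congr rfl fun i _ => ?_
      rw [← hα]
      exact Real.rpow_natCast _ _
    rw [this]
    exact Finset.single_le_sum
      (f := fun α : Fin n → ℕ => ∏ i, y i ^ (α i))
      (fun β _ => Finset.prod_nonneg fun i _ => pow_nonneg (hy i) _)
      (Finset.mem_coe.mp hαA)
  calc ∏ i, y i ^ a i
      = ∏ i, ∏ k ∈ t, y i ^ (w k * z k i) := by
        refine Finset.prod_congr rfl fun i _ => ?_
        rw [haeq i]
        exact Real.rpow_sum_of_nonneg (hy i)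
          (fun k hk => mul_nonneg (hw0 k hk) (hz0 k hk i))
    _ = ∏ k ∈ t, ∏ i, y i ^ (w k * z k i) := Finset.prod_comm
    _ = ∏ k ∈ t, (∏ i, y i ^ (z k i)) ^ (w k) := by
        refine Finset.prod_congr rfl fun k hk => ?_
        rw [← Real.finset_prod_rpow _ _
          (fun i _ => Real.rpow_nonneg (hy i) _) (w k)]
        refine Finset.prod_congr rfl fun i _ => ?_
        rw [mul_comm, Real.rpow_mul (hy i)]
    _ ≤ ∑ k ∈ t, w k * (∏ i, y i ^ (z k i)) :=
        Real.geom_mean_le_arith_mean_weighted t w _ hw0 hw1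
          (fun k _ => Finset.prod_nonneg fun i _ => Real.rpow_nonneg (hy i) _)
    _ ≤ ∑ k ∈ t, w k * ρ :=
        Finset.sum_le_sum fun k hk =>
          mul_le_mul_of_nonneg_left (hP k hk) (hw0 k hk)
    _ = ρ := by rw [← Finset.sum_mul, hw1, one_mul]

/-- If `A` is convenient (it contains a point `aᵢ·eᵢ` with `aᵢ > 0` on every coordinate
axis), then `ρ(x) = Σ_{α ∈ A} Π |xᵢ|^{αᵢ}` is strictly positive for `x ≠ 0`; and if
`u - v ∈ Γ₊(A) = conv(A) + ℝ_{≥0}ⁿ` for some nonzero `v ≥ 0`, then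
`(Π |xᵢ|^{uᵢ}) / ρ(x) → 0` as `x → 0`, `x ≠ 0`. -/
theorem monomial_div_rho_tendsto_zero (n : ℕ) (hn : 1 ≤ n)
    (A : Finset (Fin n → ℕ)) (hA : A.Nonempty)
    (hconv : ∀ i : Fin n, ∃ a : ℕ, 0 < a ∧ (Pi.single i a : Fin n → ℕ) ∈ A)
    (u : Fin n → ℝ) (hu : ∀ i, 0 ≤ u i)
    (v : Fin n → ℝ) (hv0 : v ≠ 0) (hv : ∀ i, 0 ≤ v i)
    (huv : ∃ a ∈ convexHull ℝ ((fun α : Fin n → ℕ => fun i => (α i : ℝ)) '' ↑A),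
      ∃ r : Fin n → ℝ, (∀ i, 0 ≤ r i) ∧ u - v = a + r) :
    (∀ x : Fin n → ℂ, x ≠ 0 → 0 < ∑ α ∈ A, ∏ i, ‖x i‖ ^ (α i)) ∧
    Tendsto (fun x : Fin n → ℂ =>
        (∏ i, ‖x i‖ ^ (u i)) / ∑ α ∈ A, ∏ i, ‖x i‖ ^ (α i))
      (nhdsWithin (0 : Fin n → ℂ) {x | x ≠ 0}) (nhds 0) := by
  have pos : ∀ x : Fin n → ℂ, x ≠ 0 → 0 < ∑ α ∈ A, ∏ i, ‖x i‖ ^ (α i) := by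
    intro x hx
    obtain ⟨i, hxi⟩ := Function.ne_iff.mp hx
    obtain ⟨c, hc0, hcA⟩ := hconv i
    have hterm : (0:ℝ) < ∏ j, ‖x j‖ ^ ((Pi.single i c : Fin n → ℕ) j) := by
      rw [Finset.prod_eq_single i
        (fun j _ hj => by rw [Pi.single_eq_of_ne hj, pow_zero])
        (by simp)]
      rw [Pi.single_eq_same]
      exact pow_pos (norm_pos_iff.mpr hxi) c
    exact lt_of_lt_of_le hterm
      (Finset.single_le_sum
        (f := fun α : Fin n → ℕ => ∏ j, ‖x j‖ ^ (α j))
        (fun α _ => Finset.prod_nonneg fun j _ => pow_nonneg (norm_nonneg _) _) hcA)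
  refine ⟨pos, ?_⟩
  obtain ⟨a, ha, r, hr, hur⟩ := huv
  have ha0 : ∀ i, 0 ≤ a i := by
    have hsub : convexHull ℝ ((fun α : Fin n → ℕ => fun i => (α i : ℝ)) '' ↑A)
        ⊆ {g : Fin n → ℝ | ∀ i, 0 ≤ g i} := by
      apply convexHull_min
      · rintro g ⟨α, _, rfl⟩ i
        exact Nat.cast_nonneg _
      · intro g hg h hh s t hs ht hst i
        have h1 := hg i
        have h2 := hh i
        simp only [Pi.add_apply, Pi.smul_apply, smul_eq_mul]
        exact add_nonneg (mul_nonneg hs h1) (mul_nonneg ht h2)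
    exact hsub ha
  have hueq : ∀ i, u i = a i + (r i + v i) := by
    intro i
    have := congrFun hur i
    simp only [Pi.sub_apply, Pi.add_apply] at this
    linarith
  obtain ⟨j, hj⟩ := Function.ne_iff.mp hv0
  have hvj : 0 < v j := (hv j).lt_of_ne (by simpa using Ne.symm hj)
  apply squeeze_zero' (g := fun x : Fin n → ℂ => ‖x j‖ ^ (v j))
  · exact Eventually.of_forall fun x =>
      div_nonneg
        (Finset.prod_nonneg fun i _ => Real.rpow_nonneg (norm_nonneg _) _)
        (Finset.sum_nonneg fun α _ =>
          Finset.prod_nonneg fun i _ => pow_nonneg (norm_nonneg _) _)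
  · have h1 : ∀ᶠ x : Fin n → ℂ in nhds 0, ∀ i, ‖x i‖ ≤ 1 := by
      filter_upwards [Metric.ball_mem_nhds (0 : Fin n → ℂ) one_pos] with x hx i
      have hx' : ‖x‖ < 1 := by simpa [dist_zero_right] using hx
      exact (norm_le_pi_norm x i).trans hx'.le
    filter_upwards [eventually_nhdsWithin_of_eventually_nhds h1,
      self_mem_nhdsWithin] with x hx1 hx0
    have hρ : 0 < ∑ α ∈ A, ∏ i, ‖x i‖ ^ (α i) := pos x hx0
    rw [div_le_iff₀ hρ]
    have split : (∏ i, ‖x i‖ ^ u i)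
        = (∏ i, ‖x i‖ ^ a i) * ∏ i, ‖x i‖ ^ (r i + v i) := by
      rw [← Finset.prod_mul_distrib]
      refine Finset.prod_congr rfl fun i _ => ?_
      rw [hueq i,
        Real.rpow_add_of_nonneg (norm_nonneg _) (ha0 i) (add_nonneg (hr i) (hv i))]
    rw [split]
    have h2 : ∏ i, ‖x i‖ ^ (r i + v i) ≤ ‖x j‖ ^ (v j) := by
      rw [← Finset.mul_prod_erase Finset.univ _ (Finset.mem_univ j)]
      have hfac : ‖x j‖ ^ (r j + v j) ≤ ‖x j‖ ^ (v j) := by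
        rcases eq_or_lt_of_le (norm_nonneg (x j)) with h0 | h0
        · rw [← h0, Real.zero_rpow (ne_of_gt (add_pos_of_nonneg_of_pos (hr j) hvj))]
          exact Real.rpow_nonneg le_rfl _
        · exact Real.rpow_le_rpow_of_exponent_ge h0 (hx1 j)
            (le_add_of_nonneg_left (hr j))
      have hrest : ∏ i ∈ Finset.univ.erase j, ‖x i‖ ^ (r i + v i) ≤ 1 :=
        Finset.prod_le_one
          (fun i _ => Real.rpow_nonneg (norm_nonneg _) _)
          (fun i _ => Real.rpow_le_one (norm_nonneg _) (hx1 i)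
            (add_nonneg (hr i) (hv i)))
      calc ‖x j‖ ^ (r j + v j) * ∏ i ∈ Finset.univ.erase j, ‖x i‖ ^ (r i + v i)
          ≤ ‖x j‖ ^ (v j) * 1 :=
            mul_le_mul hfac hrest
              (Finset.prod_nonneg fun i _ => Real.rpow_nonneg (norm_nonneg _) _)
              (Real.rpow_nonneg (norm_nonneg _) _)
        _ = ‖x j‖ ^ (v j) := mul_one _
    have h3 : ∏ i, ‖x i‖ ^ a i ≤ ∑ α ∈ A, ∏ i, ‖x i‖ ^ (α i) :=
      key_amgm A a ha _ (fun i => norm_nonneg _)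
    calc (∏ i, ‖x i‖ ^ a i) * ∏ i, ‖x i‖ ^ (r i + v i)
        ≤ (∑ α ∈ A, ∏ i, ‖x i‖ ^ (α i)) * (‖x j‖ ^ (v j)) :=
          mul_le_mul h3 h2
            (Finset.prod_nonneg fun i _ => Real.rpow_nonneg (norm_nonneg _) _)
            hρ.le
      _ = ‖x j‖ ^ (v j) * ∑ α ∈ A, ∏ i, ‖x i‖ ^ (α i) := mul_comm _ _
  · have hx0 : Tendsto (fun x : Fin n → ℂ => ‖x j‖) (nhds 0) (nhds 0) := by
      have hcont : Continuous fun x : Fin n → ℂ => ‖x j‖ :=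
        (continuous_apply j).norm
      have := hcont.tendsto (0 : Fin n → ℂ)
      simpa using this
    have hc : ContinuousAt (fun t : ℝ => t ^ (v j)) 0 :=
      Real.continuousAt_rpow_const 0 (v j) (Or.inr hvj.le)
    have htend := hc.tendsto.comp hx0
    rw [Real.zero_rpow hvj.ne'] at htend
    exact htend.mono_left nhdsWithin_le_nhds
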